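/- Let F be a Banach space with F.D.D. (F_i) and E ⊆ F a closed subspace, Δ = (δ_i) > 0 a decreasing null sequence. Every Δ-block tree T ⊆ S_E^{<ℕ} has a subtree S ⊆ T such that every infinite branch of S is a Δ-block sequence. -/

import Mathlib

/-!
STATEMENT 18: Let `F` be a Banach space with F.D.D. `(F_i)` (represented by its
interval projections `P a b`), `E ⊆ F` a closed subspace and `Δ = (δ_i)` a
decreasing null sequence of positive reals.  Every `Δ`-block tree
`T ⊆ S_E^{<ℕ}` has a subtree `S ⊆ T` (itself a `Δ`-block tree) such that every
infinite branch of `S` is a `Δ`-block sequence.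
-/

namespace Stmt18

variable {F : Type*} [NormedAddCommGroup F] [NormedSpace ℝ F]

/-- `(x_i)` is a `Δ`-block sequence: successive intervals `I_0 < I_1 < …` with
`‖x_i − P_{I_i}(x_i)‖ < δ_i`. -/
def IsDeltaBlock (P : ℕ → ℕ → F →L[ℝ] F) (δ : ℕ → ℝ) (x : ℕ → F) : Prop :=
  ∃ I : ℕ → ℕ × ℕ, (∀ i, (I i).1 ≤ (I i).2) ∧ (∀ i, (I i).2 < (I (i + 1)).1) ∧
    ∀ i, ‖x i - P (I i).1 (I i).2 (x i)‖ < δ i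

/-- A `Δ`-block tree on the unit sphere of `E`: nonempty, closed under initial
segments, and at every node the immediate successors form a sequence of unit
vectors of `E` which are `δ_n`-close to interval projections with left
endpoints tending to infinity (`n` = length of the node). -/
def IsDeltaBlockTree (P : ℕ → ℕ → F →L[ℝ] F) (δ : ℕ → ℝ) (E : Submodule ℝ F)
    (T : Set (List F)) : Prop :=
  T.Nonempty ∧ (∀ l ∈ T, ∀ n, l.take n ∈ T) ∧
  ∀ l ∈ T, ∃ y : ℕ → F, (∀ i, y i ∈ E ∧ ‖y i‖ = 1) ∧
    (∀ i, l ++ [y i] ∈ T) ∧ (∀ z, l ++ [z] ∈ T → ∃ i, z = y i) ∧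
    ∃ I : ℕ → ℕ × ℕ, (∀ i, (I i).1 ≤ (I i).2) ∧
      (∀ i, ‖y i - P (I i).1 (I i).2 (y i)‖ < δ l.length) ∧
      Filter.Tendsto (fun i => (I i).1) Filter.atTop Filter.atTop

def IsBranch (T : Set (List F)) (x : ℕ → F) : Prop :=
  ∀ n, (List.ofFn fun i : Fin n => x i) ∈ T

end Stmt18

namespace Stmt18Aux

/-- Canonical bound computed along a (reversed) list: `bnd yl Il m` is one more
than the right endpoint of the canonical interval attached to the head of `m`. -/
noncomputable def bnd {F : Type*} (yl : List F → ℕ → F)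
    (Il : List F → ℕ → ℕ × ℕ) : List F → ℕ
  | [] => 0
  | z :: m =>
    (Il m.reverse (sInf {j | yl m.reverse j = z ∧
      bnd yl Il m ≤ (Il m.reverse j).1})).2 + 1

/-- `Ok T yl Il m` : the reversed list `m` codes a node of the subtree. -/
def Ok {F : Type*} (T : Set (List F)) (yl : List F → ℕ → F)
    (Il : List F → ℕ → ℕ × ℕ) : List F → Prop
  | [] => True
  | z :: m => Ok T yl Il m ∧ m.reverse ∈ T ∧
      ∃ j, yl m.reverse j = z ∧ bnd yl Il m ≤ (Il m.reverse j).1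

end Stmt18Aux

theorem stmt18 {F : Type*} [NormedAddCommGroup F] [NormedSpace ℝ F] [CompleteSpace F]
    (P : ℕ → ℕ → F →L[ℝ] F)  -- interval projections of the F.D.D.
    (E : Submodule ℝ F) (hE : IsClosed (E : Set F))
    (δ : ℕ → ℝ) (hδpos : ∀ i, 0 < δ i) (hδdec : ∀ i, δ (i + 1) ≤ δ i)
    (hδnull : Filter.Tendsto δ Filter.atTop (nhds 0))
    (T : Set (List F)) (hT : Stmt18.IsDeltaBlockTree P δ E T) :
    ∃ S : Set (List F), S ⊆ T ∧ Stmt18.IsDeltaBlockTree P δ E S ∧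
      ∀ x : ℕ → F, Stmt18.IsBranch S x → Stmt18.IsDeltaBlock P δ x := by
  classical
  obtain ⟨hne, htake, hsucc⟩ := hT
  have hempty : ([] : List F) ∈ T := by
    obtain ⟨l0, hl0⟩ := hne
    simpa using htake l0 hl0 0
  -- extract total choice functions
  have hch : ∀ l : List F, ∃ (y : ℕ → F) (I : ℕ → ℕ × ℕ),
      l ∈ T → ((∀ i, y i ∈ E ∧ ‖y i‖ = 1) ∧ (∀ i, l ++ [y i] ∈ T) ∧
        (∀ z, l ++ [z] ∈ T → ∃ i, z = y i) ∧
        (∀ i, (I i).1 ≤ (I i).2) ∧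
        (∀ i, ‖y i - P (I i).1 (I i).2 (y i)‖ < δ l.length) ∧
        Filter.Tendsto (fun i => (I i).1) Filter.atTop Filter.atTop) := by
    intro l
    by_cases hl : l ∈ T
    · obtain ⟨y, h1, h2, h3, I, h4, h5, h6⟩ := hsucc l hl
      exact ⟨y, I, fun _ => ⟨h1, h2, h3, h4, h5, h6⟩⟩
    · exact ⟨fun _ => 0, fun _ => (0, 0), fun h => absurd h hl⟩
  choose yl Il hprop using hch
  set S : Set (List F) := {l | Stmt18Aux.Ok T yl Il l.reverse} with hSdef
  -- S ⊆ T
  have hSsubT : ∀ l, l ∈ S → l ∈ T := by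
    intro l hl
    rcases List.eq_nil_or_concat l with rfl | ⟨m, z, rfl⟩
    · exact hempty
    · have h : Stmt18Aux.Ok T yl Il (z :: m.reverse) := by
        simpa [hSdef] using hl
      obtain ⟨-, hmT, j, hj1, -⟩ := h
      rw [List.reverse_reverse] at hmT hj1
      have := (hprop m hmT).2.1 j
      rw [hj1] at this
      simpa [List.concat_eq_append] using this
  -- Ok is closed under drop
  have hOkdrop : ∀ (m : List F), Stmt18Aux.Ok T yl Il m →
      ∀ k, Stmt18Aux.Ok T yl Il (m.drop k) := by
    intro m
    induction m with
    | nil => intro _ k; simpa [Stmt18Aux.Ok] using (trivial : Stmt18Aux.Ok T yl Il [])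
    | cons z m ih =>
      intro h k
      cases k with
      | zero => exact h
      | succ k => exact ih h.1 k
  -- key: children structure at a node of S
  have hchild : ∀ l ∈ S, ∃ y : ℕ → F, (∀ i, y i ∈ E ∧ ‖y i‖ = 1) ∧
      (∀ i, l ++ [y i] ∈ S) ∧ (∀ z, l ++ [z] ∈ S → ∃ i, z = y i) ∧
      ∃ I : ℕ → ℕ × ℕ, (∀ i, (I i).1 ≤ (I i).2) ∧
        (∀ i, ‖y i - P (I i).1 (I i).2 (y i)‖ < δ l.length) ∧
        Filter.Tendsto (fun i => (I i).1) Filter.atTop Filter.atTop := by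
    intro l hlS
    have hlT : l ∈ T := hSsubT l hlS
    obtain ⟨hy1, hy2, hy3, hI1, hI2, hI3⟩ := hprop l hlT
    set b : ℕ := Stmt18Aux.bnd yl Il l.reverse with hbdef
    obtain ⟨N, hN⟩ := (Filter.eventually_atTop).1 (hI3.eventually_ge_atTop b)
    have hOkl : Stmt18Aux.Ok T yl Il l.reverse := hlS
    set g : ℕ → ℕ := fun i => if b ≤ (Il l i).1 then i else N with hgdef
    have hg : ∀ i, b ≤ (Il l (g i)).1 := by
      intro i
      by_cases h : b ≤ (Il l i).1
      · simpa [hgdef, h] using h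
      · simpa [hgdef, h] using hN N le_rfl
    refine ⟨fun i => yl l (g i), fun i => hy1 (g i), ?_, ?_, fun i => Il l (g i),
      fun i => hI1 (g i), fun i => hI2 (g i), ?_⟩
    · intro i
      show Stmt18Aux.Ok T yl Il (l ++ [yl l (g i)]).reverse
      rw [List.reverse_append]
      refine ⟨hOkl, ?_, g i, ?_, ?_⟩ <;>
        simp [List.reverse_reverse, hlT, hg i, ← hbdef]
    · intro z hz
      have h : Stmt18Aux.Ok T yl Il (z :: l.reverse) := by
        have := hz
        rw [hSdef] at this
        simpa [List.reverse_append] using this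
      obtain ⟨-, -, j, hj1, hj2⟩ := h
      rw [List.reverse_reverse] at hj1 hj2
      refine ⟨j, ?_⟩
      have hgj : g j = j := by simp [hgdef, hbdef ▸ hj2]
      show z = yl l (g j)
      rw [hgj, hj1]
    · refine hI3.congr' ?_
      filter_upwards [Filter.eventually_atTop.2 ⟨N, fun i hi => hN i hi⟩] with i hi
      simp [hgdef, hi]
  refine ⟨S, hSsubT, ⟨⟨[], by simp [hSdef, Stmt18Aux.Ok]⟩, ?_, hchild⟩, ?_⟩
  · -- closed under take
    intro l hl n
    show Stmt18Aux.Ok T yl Il (l.take n).reverse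
    have hrev : (l.take n).reverse = l.reverse.drop (l.length - n) := by
      have := @List.take_reverse F l.reverse n
      rw [List.reverse_reverse, List.length_reverse] at this
      rw [this, List.reverse_reverse]
    rw [hrev]
    exact hOkdrop l.reverse hl (l.length - n)
  · -- branches are Δ-blocks
    intro x hx
    set L : ℕ → List F := fun n => List.ofFn fun i : Fin n => x i with hLdef
    have hLsucc : ∀ n, L (n + 1) = L n ++ [x n] := by
      intro n
      show (List.ofFn fun i : Fin (n + 1) => x i) =
        (List.ofFn fun i : Fin n => x i) ++ [x n]
      rw [List.ofFn_succ']
      simp [List.concat_eq_append]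
    have hLlen : ∀ n, (L n).length = n := by intro n; simp [hLdef]
    have hLS : ∀ n, L n ∈ S := fun n => hx n
    have hLT : ∀ n, L n ∈ T := fun n => hSsubT _ (hLS n)
    -- canonical index at step k
    set jn : ℕ → ℕ := fun k => sInf {j | yl ((L k).reverse).reverse j = x k ∧
      Stmt18Aux.bnd yl Il (L k).reverse ≤ (Il ((L k).reverse).reverse j).1} with hjdef
    have hOkcons : ∀ k, Stmt18Aux.Ok T yl Il (x k :: (L k).reverse) := by
      intro k
      have := hLS (k + 1)
      rw [hSdef] at this
      simpa [hLsucc k, List.reverse_append] using this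
    have hmem : ∀ k, jn k ∈ {j | yl ((L k).reverse).reverse j = x k ∧
        Stmt18Aux.bnd yl Il (L k).reverse ≤ (Il ((L k).reverse).reverse j).1} := by
      intro k
      obtain ⟨-, -, j, hj1, hj2⟩ := hOkcons k
      exact Nat.sInf_mem ⟨j, Set.mem_setOf.2 ⟨hj1, hj2⟩⟩
    have hbnd : ∀ k, Stmt18Aux.bnd yl Il (x k :: (L k).reverse) =
        (Il ((L k).reverse).reverse (jn k)).2 + 1 := by
      intro k
      rfl
    refine ⟨fun k => Il (L k) (jn k), ?_, ?_, ?_⟩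
    · intro k
      exact (hprop (L k) (hLT k)).2.2.2.1 (jn k)
    · intro k
      have h1 : Stmt18Aux.bnd yl Il (L (k + 1)).reverse ≤ (Il (L (k + 1)) (jn (k + 1))).1 := by
        have := (hmem (k + 1)).2
        rwa [List.reverse_reverse] at this
      have h2 : Stmt18Aux.bnd yl Il (L (k + 1)).reverse = (Il (L k) (jn k)).2 + 1 := by
        have h3 : (L (k + 1)).reverse = x k :: (L k).reverse := by
          rw [hLsucc k, List.reverse_append]; simp
        rw [h3, hbnd k, List.reverse_reverse]
      show (Il (L k) (jn k)).2 < (Il (L (k + 1)) (jn (k + 1))).1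
      omega
    · intro k
      have h1 := (hprop (L k) (hLT k)).2.2.2.2.1 (jn k)
      have h2 : yl (L k) (jn k) = x k := by
        have := (hmem k).1
        rwa [List.reverse_reverse] at this
      rw [h2, hLlen k] at h1
      exact h1
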